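/- Let h : ℝⁿ → ℝ be differentiable strongly quasiconvex with modulus γ > 0 and unique minimizer x̄. Then ‖x - x̄‖ ≤ (2/γ)‖∇h(x)‖ for all x ∈ ℝⁿ (an error bound in terms of the gradient). -/

import Mathlib

open Filter Topology

theorem error_bound_of_strongly_quasiconvex
    {n : ℕ} (h : EuclideanSpace ℝ (Fin n) → ℝ)
    (g : EuclideanSpace ℝ (Fin n) → EuclideanSpace ℝ (Fin n))
    (hgrad : ∀ x, HasGradientAt h (g x) x)
    (γ : ℝ) (hγ : 0 < γ)
    (hsq : ∀ x y : EuclideanSpace ℝ (Fin n), ∀ lam : ℝ, lam ∈ Set.Icc (0:ℝ) 1 →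
      h (lam • y + (1 - lam) • x) ≤
        max (h y) (h x) - lam * (1 - lam) * (γ / 2) * ‖x - y‖ ^ 2)
    (xbar : EuclideanSpace ℝ (Fin n)) (hmin : ∀ x, h xbar ≤ h x) :
    ∀ x, ‖x - xbar‖ ≤ (2 / γ) * ‖g x‖ := by
  intro x
  set v := xbar - x with hv
  set c : ℝ := (γ / 2) * ‖x - xbar‖ ^ 2 with hc
  -- the line function
  set φ : ℝ → ℝ := fun lam => h (x + lam • v) with hφ
  have hderiv : HasDerivAt φ (inner ℝ (g x) v : ℝ) 0 := by
    have hc' : HasDerivAt (fun lam : ℝ => x + lam • v) v 0 := by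
      have : HasDerivAt (fun lam : ℝ => lam • v) ((1:ℝ) • v) 0 :=
        (hasDerivAt_id (0:ℝ)).smul_const v
      simpa using this.const_add x
    have hf : HasFDerivAt h ((InnerProductSpace.toDual ℝ _) (g x)) (x + (0:ℝ) • v) := by
      simpa using (hgrad x).hasFDerivAt
    have := hf.comp_hasDerivAt (0:ℝ) hc'
    exact this
  -- slope bound
  have hslope : ∀ lam : ℝ, lam ∈ Set.Ioo (0:ℝ) 1 →
      (φ lam - φ 0) / lam ≤ -(1 - lam) * c := by
    intro lam hlam
    have hkey := hsq x xbar lam ⟨le_of_lt hlam.1, le_of_lt hlam.2⟩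
    have hmax : max (h xbar) (h x) = h x := max_eq_right (hmin x)
    have hpt : lam • xbar + (1 - lam) • x = x + lam • v := by
      simp [hv, smul_sub, sub_smul]; abel
    have hineq : φ lam ≤ φ 0 - lam * (1 - lam) * c := by
      have : h (x + lam • v) ≤ h x - lam * (1 - lam) * ((γ/2) * ‖x - xbar‖^2) := by
        rw [← hpt]
        calc h (lam • xbar + (1 - lam) • x) ≤
            max (h xbar) (h x) - lam * (1 - lam) * (γ / 2) * ‖x - xbar‖ ^ 2 := hkey
          _ = h x - lam * (1 - lam) * ((γ/2) * ‖x - xbar‖^2) := by rw [hmax]; ring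
      simpa [hφ, hc] using this
    have hlam0 : (0:ℝ) < lam := hlam.1
    rw [div_le_iff₀ hlam0]
    nlinarith [hineq]
  -- take the limit along 𝓝[>] 0
  have hne : (𝓝[>] (0:ℝ)).NeBot := nhdsGT_neBot 0
  have ht1 : Tendsto (fun lam => (φ lam - φ 0) / lam) (𝓝[>] (0:ℝ))
      (𝓝 (inner ℝ (g x) v : ℝ)) := by
    have := hderiv.hasDerivWithinAt (s := Set.Ioi (0:ℝ))
    have h2 := (hasDerivWithinAt_iff_tendsto_slope.mp this)
    have hsub : 𝓝[Set.Ioi (0:ℝ) \ {0}] (0:ℝ) = 𝓝[>] (0:ℝ)  := by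
      congr 1
      ext t; simp (config := {contextual := true}) [le_of_lt, lt_irrefl]
    rw [hsub] at h2
    refine h2.congr' ?_
    filter_upwards [self_mem_nhdsWithin] with t ht
    simp [slope, (Set.mem_Ioi.mp ht).ne', div_eq_inv_mul]
  have ht2 : Tendsto (fun lam : ℝ => -(1 - lam) * c) (𝓝[>] (0:ℝ)) (𝓝 (-c)) := by
    have : Tendsto (fun lam : ℝ => -(1 - lam) * c) (𝓝 (0:ℝ)) (𝓝 (-(1 - 0) * c)) := by
      apply Tendsto.mul _ tendsto_const_nhds
      exact (tendsto_const_nhds.sub tendsto_id).neg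
    simpa using this.mono_left nhdsWithin_le_nhds
  have hlim : (inner ℝ (g x) v : ℝ) ≤ -c := by
    refine le_of_tendsto_of_tendsto ht1 ht2 ?_
    filter_upwards [Ioo_mem_nhdsGT_of_mem (by norm_num : (0:ℝ) ∈ Set.Ico (0:ℝ) 1)]
      with lam hlam using hslope lam hlam
  -- conclude
  have hinner : c ≤ inner ℝ (g x) (x - xbar) := by
    have : (inner ℝ (g x) (x - xbar) : ℝ) = -(inner ℝ (g x) v : ℝ) := by
      rw [hv, ← inner_neg_right]; congr 1; abel
    linarith [hlim, this.ge, this.le]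
  have hcs : (inner ℝ (g x) (x - xbar) : ℝ) ≤ ‖g x‖ * ‖x - xbar‖ :=
    real_inner_le_norm _ _
  rcases eq_or_lt_of_le (norm_nonneg (x - xbar)) with h0 | h0
  · rw [← h0]; positivity
  · rw [hc] at hinner
    rw [div_mul_eq_mul_div, le_div_iff₀ hγ]
    nlinarith [hinner, hcs]
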